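/- Let c > 1, α ∈ (0,2)\{1}, and let θ be a smooth admissible function with respect to c and α with Fourier coefficients (c_k)_{k∈ℤ} and c̃ = 2πα/log c. Let f : ℝ → ℝ be bounded and let h > 0. Then the double series ₕΔ^α_{c,θ} f(x) := ∑_{k∈ℤ} ω_k h^{i k c̃ − α} ∑_{j=0}^∞ C(α − i k c̃, j) (−1)^j f(x − jh) converges absolutely for every x ∈ ℝ, and its value is a real number. -/

import Mathlib

open MeasureTheory Real Filter Set Complex

noncomputable section

def IsAdmissible (c α : ℝ) (θ : ℝ → ℝ) : Prop :=
  (∀ x, 0 < θ x) ∧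
  Function.Periodic θ (Real.log (c ^ (1 / α))) ∧
  ∀ y δ : ℝ, 0 ≤ δ → θ (y + δ) ≤ Real.exp (α * δ) * θ y

def IsSmoothAdmissible (c α : ℝ) (θ : ℝ → ℝ) (cfs : ℤ → ℂ) : Prop :=
  IsAdmissible c α θ ∧ Continuous θ ∧
  (∀ k : ℤ, cfs (-k) = starRingEnd ℂ (cfs k)) ∧
  (∃ C > 0, ∀ k : ℤ, k ≠ 0 → ‖cfs k‖ ≤ C / (k : ℝ) ^ 2) ∧
  Summable (fun k : ℤ => ‖cfs k‖) ∧
  ∀ x : ℝ, HasSum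
    (fun k : ℤ => cfs k * Complex.exp (Complex.I * (k : ℂ) * ((2 * Real.pi * α / Real.log c : ℝ) : ℂ) * (x : ℂ)))
    ((θ x : ℂ))

/-- Generalized binomial coefficient `C(z,j) = z(z-1)⋯(z-j+1)/j!`. -/
def gbinom (z : ℂ) (j : ℕ) : ℂ := (∏ i ∈ Finset.range j, (z - (i : ℂ))) / (j.factorial : ℂ)


lemma my_gamma_interp {x s : ℝ} (hx : 0 < x) (hs0 : 0 ≤ s) (hs1 : s ≤ 1) :
    Real.Gamma (x + s) ≤ Real.Gamma x * x ^ s := by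
  have hx1 : (0:ℝ) < x + 1 := by linarith
  have hGx : 0 < Real.Gamma x := Real.Gamma_pos_of_pos hx
  have hGx1 : Real.Gamma (x + 1) = x * Real.Gamma x := Real.Gamma_add_one hx.ne'
  have hconv := Real.convexOn_log_Gamma.2 (mem_Ioi.mpr hx) (mem_Ioi.mpr hx1)
    (by linarith : (0:ℝ) ≤ 1 - s) hs0 (by ring)
  simp only [Function.comp, smul_eq_mul] at hconv
  have harg : (1 - s) * x + s * (x + 1) = x + s := by ring
  rw [harg] at hconv
  have hGxs : 0 < Real.Gamma (x + s) := Real.Gamma_pos_of_pos (by linarith)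
  have : Real.log (Real.Gamma (x + s)) ≤ Real.log (Real.Gamma x) + s * Real.log x := by
    rw [hGx1] at hconv
    rw [Real.log_mul hx.ne' hGx.ne'] at hconv
    nlinarith [hconv]
  calc Real.Gamma (x + s) = Real.exp (Real.log (Real.Gamma (x + s))) := (Real.exp_log hGxs).symm
    _ ≤ Real.exp (Real.log (Real.Gamma x) + s * Real.log x) := Real.exp_le_exp.mpr this
    _ = Real.Gamma x * x ^ s := by
        rw [Real.exp_add, Real.exp_log hGx, Real.rpow_def_of_pos hx, mul_comm s]

/-- Telescoping bound for `∑ Γ(m+j-a)/Γ(m+j+1)`. -/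
lemma my_gamma_telescope {a : ℝ} (ha : 0 < a) {m : ℕ} (hm : a < m) :
    Summable (fun j : ℕ => Real.Gamma ((m:ℝ) + j - a) / Real.Gamma ((m:ℝ) + j + 1)) ∧
    (∑' j : ℕ, Real.Gamma ((m:ℝ) + j - a) / Real.Gamma ((m:ℝ) + j + 1)) ≤
      Real.Gamma ((m:ℝ) - a) / (a * Real.Gamma m) := by
  set T : ℕ → ℝ := fun j => Real.Gamma ((m:ℝ) + j - a) / Real.Gamma ((m:ℝ) + j + 1) with hT
  set u : ℕ → ℝ := fun j => Real.Gamma ((m:ℝ) + j - a) / Real.Gamma ((m:ℝ) + j) with hu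
  have hmpos : (0:ℝ) < m := lt_trans ha hm
  have hja : ∀ j : ℕ, (0:ℝ) < (m:ℝ) + j - a := fun j => by
    have : (0:ℝ) ≤ j := Nat.cast_nonneg j
    linarith
  have hjp : ∀ j : ℕ, (0:ℝ) < (m:ℝ) + j := fun j => by
    have : (0:ℝ) ≤ j := Nat.cast_nonneg j
    linarith
  have hTnn : ∀ j, 0 ≤ T j := fun j =>
    div_nonneg (Real.Gamma_pos_of_pos (hja j)).le
      (Real.Gamma_pos_of_pos (by have := hjp j; linarith)).le
  have hunn : ∀ j, 0 ≤ u j := fun j =>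
    div_nonneg (Real.Gamma_pos_of_pos (hja j)).le (Real.Gamma_pos_of_pos (hjp j)).le
  have hkey : ∀ j : ℕ, T j = (u j - u (j + 1)) / a := by
    intro j
    have h1 : Real.Gamma ((m:ℝ) + (j+1) - a) = ((m:ℝ) + j - a) * Real.Gamma ((m:ℝ) + j - a) := by
      have := Real.Gamma_add_one (hja j).ne'
      rw [← this]; ring_nf
    have h2 : Real.Gamma ((m:ℝ) + (j+1)) = ((m:ℝ) + j) * Real.Gamma ((m:ℝ) + j) := by
      have := Real.Gamma_add_one (hjp j).ne'
      rw [← this]; ring_nf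
    have h3 : Real.Gamma ((m:ℝ) + j + 1) = ((m:ℝ) + j) * Real.Gamma ((m:ℝ) + j) := by
      have := Real.Gamma_add_one (hjp j).ne'
      rw [← this]
    have hG1 : Real.Gamma ((m:ℝ) + j) ≠ 0 := (Real.Gamma_pos_of_pos (hjp j)).ne'
    have hG2 : ((m:ℝ) + j) ≠ 0 := (hjp j).ne'
    simp only [hT, hu]
    push_cast
    rw [h3]
    push_cast at h1 h2
    rw [h1, h2]
    field_simp
    ring
  have hpartial : ∀ n : ℕ, ∑ i ∈ Finset.range n, T i ≤ u 0 / a := by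
    intro n
    have hsum : ∑ i ∈ Finset.range n, T i = (u 0 - u n) / a := by
      induction n with
      | zero => simp
      | succ n ih =>
        rw [Finset.sum_range_succ, ih, hkey n]
        field_simp
        ring
    rw [hsum]
    gcongr
    linarith [hunn n]
  have hu0 : u 0 / a = Real.Gamma ((m:ℝ) - a) / (a * Real.Gamma m) := by
    simp only [hu]
    rw [Nat.cast_zero, add_zero]
    ring
  rw [← hu0]
  exact ⟨summable_of_sum_range_le hTnn hpartial, Real.tsum_le_of_sum_range_le hTnn hpartial⟩

lemma my_abs_Gamma_le {s : ℂ} (hs : 0 < s.re) :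
    ‖Complex.Gamma s‖ ≤ Real.Gamma s.re := by
  rw [Complex.Gamma_eq_integral hs, Real.Gamma_eq_integral hs]
  calc ‖Complex.GammaIntegral s‖
      ≤ ∫ x in Ioi (0:ℝ), ‖(↑(Real.exp (-x)) * (x:ℂ) ^ (s - 1) : ℂ)‖ :=
        norm_integral_le_integral_norm _
    _ = ∫ x in Ioi (0:ℝ), Real.exp (-x) * x ^ (s.re - 1) := by
        apply setIntegral_congr_fun measurableSet_Ioi
        intro x hx
        simp only []
        rw [norm_mul, Complex.norm_real, Real.norm_eq_abs,
          _root_.abs_of_nonneg (Real.exp_pos (-x)).le,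
          Complex.norm_cpow_eq_rpow_re_of_pos hx, Complex.sub_re, Complex.one_re]

/-- Binomial–Gamma identity. -/
lemma my_gbinom_gamma (z : ℂ) (hz : ∀ n : ℕ, z ≠ (n : ℂ)) (j : ℕ) :
    Complex.Gamma (1 - z) * ∏ i ∈ Finset.range j, (z - (i : ℂ)) =
      (-1) ^ j * (-z) * Complex.Gamma ((j : ℂ) - z) := by
  induction j with
  | zero =>
    have h0 : (-z) ≠ 0 := by simpa [neg_eq_zero] using hz 0
    have := Complex.Gamma_add_one (-z) h0
    simp only [Finset.range_zero, Finset.prod_empty, mul_one, Nat.cast_zero, pow_zero, one_mul,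
      zero_sub]
    rw [← this]; ring_nf
  | succ j ih =>
    have hjz : (j : ℂ) - z ≠ 0 := sub_ne_zero.mpr (fun e => hz j e.symm)
    have hrec : Complex.Gamma (((j : ℕ) + 1 : ℂ) - z) = ((j : ℂ) - z) * Complex.Gamma ((j:ℂ) - z) := by
      have := Complex.Gamma_add_one ((j:ℂ) - z) hjz
      rw [← this]; ring_nf
    rw [Finset.prod_range_succ, ← mul_assoc, ih]
    push_cast
    push_cast at hrec
    rw [hrec]
    ring

def myD (z : ℂ) (j : ℕ) : ℝ := ‖Complex.Gamma ((j:ℂ) - z)‖ / (j.factorial : ℝ)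

lemma myD_nonneg (z : ℂ) (j : ℕ) : 0 ≤ myD z j :=
  div_nonneg (norm_nonneg _) (by positivity)

lemma myD_le_of_two_le {a : ℝ} (ha2 : a < 2) {z : ℂ} (hzre : z.re = a) (j : ℕ) :
    myD z (j + 2) ≤ Real.Gamma ((2:ℝ) + j - a) / Real.Gamma ((2:ℝ) + j + 1) := by
  have hre : (((j:ℕ) + 2 : ℂ) - z).re = (2:ℝ) + j - a := by
    simp [Complex.sub_re, hzre]; ring
  have hre' : ((((j+2):ℕ) : ℂ) - z).re = (2:ℝ) + j - a := by push_cast; push_cast at hre; exact hre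
  have hpos : 0 < ((((j+2):ℕ) : ℂ) - z).re := by
    rw [hre']; have : (0:ℝ) ≤ j := Nat.cast_nonneg j; linarith
  have h1 := my_abs_Gamma_le hpos
  rw [hre'] at h1
  have hfac : ((j+2).factorial : ℝ) = Real.Gamma ((2:ℝ) + j + 1) := by
    have := Real.Gamma_nat_eq_factorial (j + 2)
    rw [← this]; push_cast; ring_nf
  unfold myD
  rw [hfac]
  have hG : 0 < Real.Gamma ((2:ℝ) + j + 1) :=
    Real.Gamma_pos_of_pos (by have : (0:ℝ) ≤ j := Nat.cast_nonneg j; linarith)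
  gcongr

lemma myD_summable {a : ℝ} (ha0 : 0 < a) (ha2 : a < 2) {z : ℂ} (hzre : z.re = a) :
    Summable (myD z) := by
  rw [← summable_nat_add_iff 2]
  have hm : a < (2:ℕ) := by exact_mod_cast ha2
  refine Summable.of_nonneg_of_le (fun j => myD_nonneg z _) (fun j => myD_le_of_two_le ha2 hzre j)
    ?_
  have := (my_gamma_telescope ha0 hm).1
  simpa using this

lemma my_abs_le_of_im {w : ℂ} {b : ℝ} (hb : b ≤ |w.im|) : b ≤ ‖w‖ :=
  hb.trans ((Complex.abs_im_le_norm w).trans_eq rfl)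

lemma myD_part0 {a : ℝ} (ha2 : a < 2) {z : ℂ} (hzre : z.re = a) {b : ℝ} (hb : 0 < b)
    (him : b ≤ |z.im|) (j : ℕ) :
    ‖Complex.Gamma ((j:ℂ) - z)‖ ≤ Real.Gamma ((j:ℝ) + 2 - a) / b ^ 2 := by
  set w : ℂ := (j:ℂ) - z with hw
  have hwim : |w.im| = |z.im| := by simp [hw]
  have hwim1 : |(w + 1).im| = |z.im| := by simp [hw]
  have hw0 : w ≠ 0 := by
    intro h; rw [h] at hwim; simp at hwim; rw [← hwim] at him; linarith
  have hw10 : w + 1 ≠ 0 := by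
    intro h; rw [h] at hwim1; simp at hwim1; rw [← hwim1] at him; linarith
  have hrec : Complex.Gamma (w + 2) = (w + 1) * (w * Complex.Gamma w) := by
    have h1 : Complex.Gamma (w + 1) = w * Complex.Gamma w := Complex.Gamma_add_one w hw0
    have h2 : Complex.Gamma ((w + 1) + 1) = (w + 1) * Complex.Gamma (w + 1) :=
      Complex.Gamma_add_one (w + 1) hw10
    rw [← h1, ← h2]; ring_nf
  have hre2 : (w + 2).re = (j:ℝ) + 2 - a := by simp [hw, hzre]; ring
  have habs2 : ‖Complex.Gamma (w + 2)‖ ≤ Real.Gamma ((j:ℝ) + 2 - a) := by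
    have hpos : 0 < (w + 2).re := by
      rw [hre2]; have : (0:ℝ) ≤ j := Nat.cast_nonneg j; linarith
    have := my_abs_Gamma_le hpos
    rwa [hre2] at this
  have hnorm : ‖Complex.Gamma (w + 2)‖ = ‖w + 1‖ * (‖w‖ * ‖Complex.Gamma w‖) := by
    rw [hrec, norm_mul, norm_mul]
  have hbw : b ≤ ‖w‖ := my_abs_le_of_im (by rw [hwim]; exact him)
  have hbw1 : b ≤ ‖w + 1‖ := my_abs_le_of_im (by rw [hwim1]; exact him)
  have key : ‖Complex.Gamma w‖ * b ^ 2 ≤ Real.Gamma ((j:ℝ) + 2 - a) := by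
    calc ‖Complex.Gamma w‖ * b ^ 2 = b * (b * ‖Complex.Gamma w‖) := by ring
      _ ≤ ‖w + 1‖ * (‖w‖ * ‖Complex.Gamma w‖) := by
          have h0 : 0 ≤ ‖Complex.Gamma w‖ := norm_nonneg _
          have hb' := hb.le
          gcongr
      _ ≤ Real.Gamma ((j:ℝ) + 2 - a) := hnorm ▸ habs2
  rw [le_div_iff₀ (by positivity)]
  exact key

lemma myD_tsum_bound {a : ℝ} (ha0 : 0 < a) (ha2 : a < 2) (ha1 : a ≠ 1)
    {z : ℂ} (hzre : z.re = a) {b : ℝ} (hb : 0 < b) (him : b ≤ |z.im|) :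
    (∑' j : ℕ, myD z j) ≤
      (b + 4) * (Real.Gamma (2 - a) + (b + 4) ^ (1 - a) + 2) / b ^ 2 + b ^ (-a) / a := by
  set m : ℕ := Nat.ceil b + 3 with hm
  set P : ℝ := Real.Gamma (2 - a) + (b + 4) ^ (1 - a) + 2 with hP
  have hsumD : Summable (myD z) := myD_summable ha0 ha2 hzre
  have hmge : (3:ℕ) ≤ m := by omega
  have hmR : ((m:ℝ)) = (Nat.ceil b : ℝ) + 3 := by exact_mod_cast rfl
  have hbceil : b ≤ (Nat.ceil b : ℝ) := Nat.le_ceil b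
  have hceilb : (Nat.ceil b : ℝ) < b + 1 := Nat.ceil_lt_add_one hb.le
  have hmub : (m:ℝ) ≤ b + 4 := by rw [hmR]; linarith
  have hmlb2 : b ≤ (m:ℝ) - 2 := by rw [hmR]; linarith
  have hmlb1 : b ≤ (m:ℝ) - 1 := by rw [hmR]; linarith
  have hPpos : 0 < P := by
    have h1 : 0 < Real.Gamma (2 - a) := Real.Gamma_pos_of_pos (by linarith)
    have h2 : (0:ℝ) ≤ (b + 4) ^ (1 - a) := Real.rpow_nonneg (by linarith) _
    rw [hP]; linarith
  -- termwise bound for j < m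
  have hterm1 : ∀ j : ℕ, j < m → Real.Gamma ((j:ℝ) + 2 - a) / (j.factorial : ℝ) ≤ P := by
    intro j hjm
    have hjp : (0:ℝ) < (j:ℝ) + 1 := by positivity
    have hfac : Real.Gamma ((j:ℝ) + 1) = (j.factorial : ℝ) := Real.Gamma_nat_eq_factorial j
    rcases lt_or_gt_of_ne ha1 with hlt | hgt
    · -- a < 1
      have hint : Real.Gamma ((j:ℝ) + 2 - a) ≤ Real.Gamma ((j:ℝ) + 1) * ((j:ℝ) + 1) ^ (1 - a) := by
        have := my_gamma_interp hjp (by linarith : (0:ℝ) ≤ 1 - a) (by linarith : 1 - a ≤ 1)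
        have harg : (j:ℝ) + 1 + (1 - a) = (j:ℝ) + 2 - a := by ring
        rwa [harg] at this
      have hle : ((j:ℝ) + 1) ^ (1 - a) ≤ (b + 4) ^ (1 - a) := by
        apply Real.rpow_le_rpow (by positivity) _ (by linarith)
        have : (j:ℝ) + 1 ≤ (m:ℝ) := by exact_mod_cast Nat.succ_le_of_lt hjm
        linarith
      have h1 : Real.Gamma ((j:ℝ) + 2 - a) / (j.factorial : ℝ) ≤ ((j:ℝ) + 1) ^ (1 - a) := by
        rw [div_le_iff₀ (by positivity), ← hfac]
        calc Real.Gamma ((j:ℝ) + 2 - a) ≤ Real.Gamma ((j:ℝ) + 1) * ((j:ℝ) + 1) ^ (1 - a) := hint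
          _ = ((j:ℝ) + 1) ^ (1 - a) * Real.Gamma ((j:ℝ) + 1) := by ring
      have h2 : (0:ℝ) < Real.Gamma (2 - a) := Real.Gamma_pos_of_pos (by linarith)
      rw [hP]; linarith
    · -- 1 < a
      rcases Nat.eq_zero_or_pos j with rfl | hj1
      · simp only [Nat.cast_zero, Nat.factorial_zero, Nat.cast_one, div_one, zero_add]
        have h2 : (0:ℝ) ≤ (b + 4) ^ (1 - a) := Real.rpow_nonneg (by linarith) _
        linarith
      · have hjR : (1:ℝ) ≤ (j:ℝ) := by exact_mod_cast hj1
        have hjpos : (0:ℝ) < (j:ℝ) := by linarith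
        have hint : Real.Gamma ((j:ℝ) + 2 - a) ≤ Real.Gamma ((j:ℝ)) * ((j:ℝ)) ^ (2 - a) := by
          have := my_gamma_interp hjpos (by linarith : (0:ℝ) ≤ 2 - a) (by linarith : 2 - a ≤ 1)
          have harg : (j:ℝ) + (2 - a) = (j:ℝ) + 2 - a := by ring
          rwa [harg] at this
        have hfacj : (j.factorial : ℝ) = (j:ℝ) * Real.Gamma ((j:ℝ)) := by
          obtain ⟨i, rfl⟩ := Nat.exists_eq_succ_of_ne_zero (Nat.pos_iff_ne_zero.mp hj1)
          have h1 : Real.Gamma ((i:ℝ) + 1) = (i.factorial : ℝ) := Real.Gamma_nat_eq_factorial i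
          have h2 : ((i+1:ℕ):ℝ) = (i:ℝ) + 1 := by push_cast; ring
          rw [h2, h1]
          push_cast [Nat.factorial_succ]
          ring
        have hGj : 0 < Real.Gamma ((j:ℝ)) := Real.Gamma_pos_of_pos hjpos
        have hpow : ((j:ℝ)) ^ (2 - a) = (j:ℝ) * ((j:ℝ)) ^ (1 - a) := by
          rw [show (2:ℝ) - a = 1 + (1 - a) by ring, Real.rpow_add hjpos, Real.rpow_one]
        have hle1 : ((j:ℝ)) ^ (1 - a) ≤ 1 :=
          Real.rpow_le_one_of_one_le_of_nonpos hjR (by linarith)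
        have : Real.Gamma ((j:ℝ) + 2 - a) / (j.factorial : ℝ) ≤ ((j:ℝ)) ^ (1 - a) := by
          rw [div_le_iff₀ (by positivity), hfacj]
          calc Real.Gamma ((j:ℝ) + 2 - a) ≤ Real.Gamma ((j:ℝ)) * ((j:ℝ)) ^ (2 - a) := hint
            _ = ((j:ℝ)) ^ (1 - a) * ((j:ℝ) * Real.Gamma ((j:ℝ))) := by rw [hpow]; ring
        have h2 : (0:ℝ) < Real.Gamma (2 - a) := Real.Gamma_pos_of_pos (by linarith)
        have h3 : (0:ℝ) ≤ (b + 4) ^ (1 - a) := Real.rpow_nonneg (by linarith) _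
        rw [hP]; linarith
  -- sum over j < m
  have hpart1 : ∑ j ∈ Finset.range m, myD z j ≤ (b + 4) * P / b ^ 2 := by
    have hbd : ∀ j ∈ Finset.range m, myD z j ≤ P / b ^ 2 := by
      intro j hj
      rw [Finset.mem_range] at hj
      have h0 := myD_part0 ha2 hzre hb him j
      have ht := hterm1 j hj
      have hfp : (0:ℝ) < (j.factorial : ℝ) := by exact_mod_cast j.factorial_pos
      unfold myD
      calc ‖Complex.Gamma ((j:ℂ) - z)‖ / (j.factorial:ℝ)
          ≤ (Real.Gamma ((j:ℝ) + 2 - a) / b ^ 2) / (j.factorial:ℝ) := by gcongr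
        _ = (Real.Gamma ((j:ℝ) + 2 - a) / (j.factorial:ℝ)) / b ^ 2 := by ring
        _ ≤ P / b ^ 2 := by gcongr
    calc ∑ j ∈ Finset.range m, myD z j ≤ ∑ _j ∈ Finset.range m, P / b ^ 2 :=
          Finset.sum_le_sum hbd
      _ = (m:ℝ) * (P / b ^ 2) := by rw [Finset.sum_const, Finset.card_range]; simp [nsmul_eq_mul]
      _ ≤ (b + 4) * (P / b ^ 2) := by
          have hq : 0 ≤ P / b ^ 2 := div_nonneg hPpos.le (by positivity)
          gcongr
      _ = (b + 4) * P / b ^ 2 := by ring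
  -- tail
  have hmaR : a < (m:ℝ) := by
    rw [hmR]
    have h9 : (0:ℝ) ≤ (Nat.ceil b : ℝ) := by positivity
    linarith
  obtain ⟨hTsum, hTbound⟩ := my_gamma_telescope ha0 hmaR
  have htail_term : ∀ j : ℕ, myD z (j + m) ≤
      Real.Gamma ((m:ℝ) + j - a) / Real.Gamma ((m:ℝ) + j + 1) := by
    intro j
    have hre : (((j + m : ℕ):ℂ) - z).re = (m:ℝ) + j - a := by
      simp [Complex.sub_re, hzre]; push_cast; ring
    have hrepos : 0 < (((j + m : ℕ):ℂ) - z).re := by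
      rw [hre]
      have h3 : (3:ℝ) ≤ (m:ℝ) := by exact_mod_cast hmge
      have : (0:ℝ) ≤ (j:ℝ) := Nat.cast_nonneg j
      linarith
    have h1 := my_abs_Gamma_le hrepos
    rw [hre] at h1
    have hfac : ((j + m).factorial : ℝ) = Real.Gamma ((m:ℝ) + j + 1) := by
      have := Real.Gamma_nat_eq_factorial (j + m)
      rw [← this]; push_cast; ring_nf
    unfold myD
    rw [hfac]
    have hG : 0 < Real.Gamma ((m:ℝ) + j + 1) := by
      apply Real.Gamma_pos_of_pos
      have : (0:ℝ) ≤ (j:ℝ) := Nat.cast_nonneg j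
      have h3 : (3:ℝ) ≤ (m:ℝ) := by exact_mod_cast hmge
      linarith
    gcongr
  have htail : (∑' j : ℕ, myD z (j + m)) ≤ b ^ (-a) / a := by
    have h1 : (∑' j : ℕ, myD z (j + m)) ≤
        ∑' j : ℕ, Real.Gamma ((m:ℝ) + j - a) / Real.Gamma ((m:ℝ) + j + 1) := by
      apply Summable.tsum_le_tsum htail_term ((summable_nat_add_iff m).mpr hsumD) hTsum
    refine h1.trans (hTbound.trans ?_)
    -- Γ(m-a)/(a Γ(m)) ≤ b^(-a)/a
    have hGm : 0 < Real.Gamma ((m:ℝ)) := Real.Gamma_pos_of_pos (by linarith)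
    have hkey : Real.Gamma ((m:ℝ) - a) ≤ Real.Gamma ((m:ℝ)) * b ^ (-a) := by
      rcases lt_or_gt_of_ne ha1 with hlt | hgt
      · -- a < 1 : interpolate between m-1 and m
        have hm1 : (0:ℝ) < (m:ℝ) - 1 := by linarith
        have hint := my_gamma_interp hm1 (by linarith : (0:ℝ) ≤ 1 - a) (by linarith : 1 - a ≤ 1)
        have harg : (m:ℝ) - 1 + (1 - a) = (m:ℝ) - a := by ring
        rw [harg] at hint
        have hrecm : Real.Gamma ((m:ℝ)) = ((m:ℝ) - 1) * Real.Gamma ((m:ℝ) - 1) := by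
          have := Real.Gamma_add_one hm1.ne'
          rw [show (m:ℝ) - 1 + 1 = (m:ℝ) by ring] at this
          exact this
        have hpow : ((m:ℝ) - 1) ^ (1 - a) = ((m:ℝ) - 1) * ((m:ℝ) - 1) ^ (-a) := by
          rw [show (1:ℝ) - a = 1 + (-a) by ring, Real.rpow_add hm1, Real.rpow_one]
        have hmono : ((m:ℝ) - 1) ^ (-a) ≤ b ^ (-a) :=
          Real.rpow_le_rpow_of_nonpos hb hmlb1 (by linarith)
        calc Real.Gamma ((m:ℝ) - a) ≤ Real.Gamma ((m:ℝ) - 1) * ((m:ℝ) - 1) ^ (1 - a) := hint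
          _ = ((m:ℝ) - 1) * Real.Gamma ((m:ℝ) - 1) * ((m:ℝ) - 1) ^ (-a) := by rw [hpow]; ring
          _ ≤ ((m:ℝ) - 1) * Real.Gamma ((m:ℝ) - 1) * b ^ (-a) := by
              have : 0 < ((m:ℝ) - 1) * Real.Gamma ((m:ℝ) - 1) :=
                mul_pos hm1 (Real.Gamma_pos_of_pos hm1)
              gcongr
          _ = Real.Gamma ((m:ℝ)) * b ^ (-a) := by rw [hrecm]
      · -- 1 < a : interpolate between m-2 and m-1
        have hm2 : (0:ℝ) < (m:ℝ) - 2 := by linarith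
        have hm1 : (0:ℝ) < (m:ℝ) - 1 := by linarith
        have hint := my_gamma_interp hm2 (by linarith : (0:ℝ) ≤ 2 - a) (by linarith : 2 - a ≤ 1)
        have harg : (m:ℝ) - 2 + (2 - a) = (m:ℝ) - a := by ring
        rw [harg] at hint
        have hrecm : Real.Gamma ((m:ℝ)) = ((m:ℝ) - 1) * (((m:ℝ) - 2) * Real.Gamma ((m:ℝ) - 2)) := by
          have h1 := Real.Gamma_add_one hm2.ne'
          rw [show (m:ℝ) - 2 + 1 = (m:ℝ) - 1 by ring] at h1
          have h2 := Real.Gamma_add_one hm1.ne'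
          rw [show (m:ℝ) - 1 + 1 = (m:ℝ) by ring] at h2
          rw [h2, h1]
        have hpow : ((m:ℝ) - 2) ^ (2 - a) = ((m:ℝ) - 2) * (((m:ℝ) - 2) * ((m:ℝ) - 2) ^ (-a)) := by
          rw [show (2:ℝ) - a = 1 + (1 + (-a)) by ring, Real.rpow_add hm2, Real.rpow_add hm2,
            Real.rpow_one]
        have hmono : ((m:ℝ) - 2) ^ (-a) ≤ b ^ (-a) :=
          Real.rpow_le_rpow_of_nonpos hb hmlb2 (by linarith)
        have hGm2 : 0 < Real.Gamma ((m:ℝ) - 2) := Real.Gamma_pos_of_pos hm2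
        calc Real.Gamma ((m:ℝ) - a) ≤ Real.Gamma ((m:ℝ) - 2) * ((m:ℝ) - 2) ^ (2 - a) := hint
          _ = ((m:ℝ) - 2) * (((m:ℝ) - 2) * Real.Gamma ((m:ℝ) - 2)) * ((m:ℝ) - 2) ^ (-a) := by
              rw [hpow]; ring
          _ ≤ ((m:ℝ) - 1) * (((m:ℝ) - 2) * Real.Gamma ((m:ℝ) - 2)) * b ^ (-a) := by
              have h0 : (0:ℝ) < ((m:ℝ) - 2) * Real.Gamma ((m:ℝ) - 2) := mul_pos hm2 hGm2
              have hmm : (m:ℝ) - 2 ≤ (m:ℝ) - 1 := by linarith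
              have hp2 : (0:ℝ) ≤ ((m:ℝ) - 2) ^ (-a) := Real.rpow_nonneg hm2.le _
              apply mul_le_mul (by nlinarith) hmono hp2 (by positivity)
          _ = Real.Gamma ((m:ℝ)) * b ^ (-a) := by rw [hrecm]
    calc Real.Gamma ((m:ℝ) - a) / (a * Real.Gamma ((m:ℝ)))
        ≤ (Real.Gamma ((m:ℝ)) * b ^ (-a)) / (a * Real.Gamma ((m:ℝ))) := by gcongr
      _ = b ^ (-a) / a := by field_simp
  -- combine
  have hsplit := (Summable.sum_add_tsum_nat_add m hsumD).symm
  calc (∑' j : ℕ, myD z j)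
      = ∑ j ∈ Finset.range m, myD z j + ∑' j : ℕ, myD z (j + m) := hsplit
    _ ≤ (b + 4) * P / b ^ 2 + b ^ (-a) / a := add_le_add hpart1 htail

def myz (a t : ℝ) (k : ℤ) : ℂ := (a:ℂ) - Complex.I * (k:ℂ) * (t:ℂ)

lemma myz_re (a t : ℝ) (k : ℤ) : (myz a t k).re = a := by
  simp [myz, Complex.sub_re, Complex.mul_re, Complex.I_re, Complex.I_im]

lemma myz_im (a t : ℝ) (k : ℤ) : (myz a t k).im = -((k:ℝ) * t) := by
  simp [myz, Complex.sub_im, Complex.mul_im, Complex.I_re, Complex.I_im]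

lemma myz_natcast_ne {a t : ℝ} (ha0 : 0 < a) (ha2 : a < 2) (ha1 : a ≠ 1) (ht : 0 < t) (k : ℤ)
    (n : ℕ) : myz a t k ≠ (n : ℂ) := by
  intro heq
  have him : (myz a t k).im = 0 := by rw [heq]; simp
  rw [myz_im] at him
  have hk : (k:ℝ) = 0 := by
    rcases mul_eq_zero.mp (neg_eq_zero.mp him) with h | h
    · exact h
    · exact absurd h ht.ne'
  have hre : a = (n:ℝ) := by
    have := congrArg Complex.re heq
    rw [myz_re] at this
    simpa using this
  have hn0 : 0 < n := by
    by_contra hn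
    push_neg at hn
    interval_cases n
    · simp at hre; linarith
  have hn2 : n < 2 := by
    by_contra hn
    push_neg at hn
    have : (2:ℝ) ≤ (n:ℝ) := by exact_mod_cast hn
    linarith
  have : n = 1 := by omega
  rw [this] at hre
  simp at hre
  exact ha1 hre

lemma myz_norm_le {a t : ℝ} (ha0 : 0 < a) (ht : 0 < t) (k : ℤ) :
    ‖myz a t k‖ ≤ a + t * |(k:ℝ)| := by
  unfold myz
  refine (norm_sub_le _ _).trans ?_
  have h1 : ‖((a:ℝ):ℂ)‖ = a := by
    rw [Complex.norm_real]; exact abs_of_pos ha0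
  have h2 : Complex.I * (k:ℂ) * (t:ℂ) = (((k:ℝ) * t : ℝ):ℂ) * Complex.I := by push_cast; ring
  rw [h1, h2, norm_mul, Complex.norm_I, mul_one, Complex.norm_real, Real.norm_eq_abs, abs_mul,
    abs_of_pos ht]
  linarith [abs_nonneg ((k:ℝ))]

lemma my_claim {a t : ℝ} (ha0 : 0 < a) (ha2 : a < 2) (ha1 : a ≠ 1) (ht : 0 < t) {r : ℝ} (hr : 1 ≤ r) :
    (a + t * r) * ((t * r + 4) * (Real.Gamma (2 - a) + (t * r + 4) ^ (1 - a) + 2) / (t * r) ^ 2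
        + (t * r) ^ (-a) / a)
      ≤ ((a + t) * (t + 4) / t ^ 2) * (Real.Gamma (2 - a) + 3)
        + (((a + t) * (t + 4) / t ^ 2) * (t + 4) + (a + t) * t ^ (-a) / a) * r ^ (1 - a) := by
  have hr0 : (0:ℝ) < r := lt_of_lt_of_le one_pos hr
  set b : ℝ := t * r with hbdef
  have hb : 0 < b := mul_pos ht hr0
  have hrpow0 : (0:ℝ) ≤ r ^ (1 - a) := Real.rpow_nonneg hr0.le _
  have hG2 : 0 < Real.Gamma (2 - a) := Real.Gamma_pos_of_pos (by linarith)
  -- P bound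
  have hP : Real.Gamma (2 - a) + (b + 4) ^ (1 - a) + 2 ≤
      (Real.Gamma (2 - a) + 3) + (t + 4) * r ^ (1 - a) := by
    have key : (b + 4) ^ (1 - a) ≤ 1 + (t + 4) * r ^ (1 - a) := by
      rcases lt_or_gt_of_ne ha1 with hlt | hgt
      · -- a < 1
        have h1 : (b + 4) ^ (1 - a) ≤ ((t + 4) * r) ^ (1 - a) := by
          apply Real.rpow_le_rpow (by linarith) _ (by linarith)
          calc b + 4 = t * r + 4 := rfl
            _ ≤ t * r + 4 * r := by nlinarith
            _ = (t + 4) * r := by ring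
        have h2 : ((t + 4) * r) ^ (1 - a) = (t + 4) ^ (1 - a) * r ^ (1 - a) :=
          Real.mul_rpow (by linarith) hr0.le
        have h3 : (t + 4) ^ (1 - a) ≤ (t + 4) := by
          calc (t + 4) ^ (1 - a) ≤ (t + 4) ^ (1:ℝ) :=
                Real.rpow_le_rpow_of_exponent_le (by linarith) (by linarith)
            _ = t + 4 := Real.rpow_one _
        calc (b + 4) ^ (1 - a) ≤ (t + 4) ^ (1 - a) * r ^ (1 - a) := by rw [← h2]; exact h1
          _ ≤ (t + 4) * r ^ (1 - a) := by gcongr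
          _ ≤ 1 + (t + 4) * r ^ (1 - a) := by linarith [mul_nonneg (by linarith : (0:ℝ) ≤ t + 4) hrpow0]
      · -- 1 < a
        have h1 : (b + 4) ^ (1 - a) ≤ 1 :=
          Real.rpow_le_one_of_one_le_of_nonpos (by linarith) (by linarith)
        have h2 : 0 ≤ (t + 4) * r ^ (1 - a) := mul_nonneg (by linarith) hrpow0
        linarith
    linarith
  set P' : ℝ := (Real.Gamma (2 - a) + 3) + (t + 4) * r ^ (1 - a) with hP'def
  have hP'0 : 0 < P' := by
    have := mul_nonneg (by linarith : (0:ℝ) ≤ t + 4) hrpow0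
    rw [hP'def]; linarith
  -- first summand
  have hfirst : (a + b) * ((b + 4) * (Real.Gamma (2 - a) + (b + 4) ^ (1 - a) + 2) / b ^ 2)
      ≤ ((a + t) * (t + 4) / t ^ 2) * P' := by
    have hb2 : b ^ 2 = t ^ 2 * r ^ 2 := by rw [hbdef]; ring
    have hnum : (a + b) * ((b + 4) * (Real.Gamma (2 - a) + (b + 4) ^ (1 - a) + 2))
        ≤ ((a + t) * r) * (((t + 4) * r) * P') := by
      have e1 : a + b ≤ (a + t) * r := by rw [hbdef]; nlinarith
      have e2 : b + 4 ≤ (t + 4) * r := by rw [hbdef]; nlinarith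
      have e3 : (0:ℝ) ≤ Real.Gamma (2 - a) + (b + 4) ^ (1 - a) + 2 := by
        have := Real.rpow_nonneg (by linarith : (0:ℝ) ≤ b + 4) (1 - a)
        linarith
      have e4 : Real.Gamma (2 - a) + (b + 4) ^ (1 - a) + 2 ≤ P' := hP
      have e5 : (0:ℝ) ≤ a + b := by linarith
      have e6 : (0:ℝ) ≤ b + 4 := by linarith
      calc (a + b) * ((b + 4) * (Real.Gamma (2 - a) + (b + 4) ^ (1 - a) + 2))
          ≤ ((a + t) * r) * ((b + 4) * (Real.Gamma (2 - a) + (b + 4) ^ (1 - a) + 2)) := by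
            apply mul_le_mul_of_nonneg_right e1 (mul_nonneg e6 e3)
        _ ≤ ((a + t) * r) * (((t + 4) * r) * P') := by
            apply mul_le_mul_of_nonneg_left _ (by nlinarith : (0:ℝ) ≤ (a + t) * r)
            apply mul_le_mul e2 e4 e3 (by nlinarith)
      done
    calc (a + b) * ((b + 4) * (Real.Gamma (2 - a) + (b + 4) ^ (1 - a) + 2) / b ^ 2)
        = (a + b) * ((b + 4) * (Real.Gamma (2 - a) + (b + 4) ^ (1 - a) + 2)) / (t ^ 2 * r ^ 2) := by
          rw [hb2]; ring
      _ ≤ ((a + t) * r) * (((t + 4) * r) * P') / (t ^ 2 * r ^ 2) := by gcongr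
      _ = ((a + t) * (t + 4) / t ^ 2) * P' * (r ^ 2 / r ^ 2) := by ring
      _ = ((a + t) * (t + 4) / t ^ 2) * P' := by
          rw [div_self (by positivity : (r:ℝ) ^ 2 ≠ 0), mul_one]
  -- second summand
  have hsecond : (a + b) * ((t * r) ^ (-a) / a) ≤ ((a + t) * t ^ (-a) / a) * r ^ (1 - a) := by
    have h1 : (t * r) ^ (-a) = t ^ (-a) * r ^ (-a) := Real.mul_rpow ht.le hr0.le
    have h2 : r * r ^ (-a) = r ^ (1 - a) := by
      rw [show (1:ℝ) - a = 1 + (-a) by ring, Real.rpow_add hr0, Real.rpow_one]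
    have e1 : a + b ≤ (a + t) * r := by rw [hbdef]; nlinarith
    have h3 : (0:ℝ) ≤ (t * r) ^ (-a) / a := div_nonneg (Real.rpow_nonneg (by positivity) _) ha0.le
    calc (a + b) * ((t * r) ^ (-a) / a) ≤ ((a + t) * r) * ((t * r) ^ (-a) / a) :=
          mul_le_mul_of_nonneg_right e1 h3
      _ = ((a + t) * t ^ (-a) / a) * (r * r ^ (-a)) := by rw [h1]; ring
      _ = ((a + t) * t ^ (-a) / a) * r ^ (1 - a) := by rw [h2]
  have hexpand : ((a + t) * (t + 4) / t ^ 2) * P' =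
      ((a + t) * (t + 4) / t ^ 2) * (Real.Gamma (2 - a) + 3)
        + (((a + t) * (t + 4) / t ^ 2) * (t + 4)) * r ^ (1 - a) := by
    rw [hP'def]; ring
  calc (a + b) * ((b + 4) * (Real.Gamma (2 - a) + (b + 4) ^ (1 - a) + 2) / b ^ 2
        + (t * r) ^ (-a) / a)
      = (a + b) * ((b + 4) * (Real.Gamma (2 - a) + (b + 4) ^ (1 - a) + 2) / b ^ 2)
        + (a + b) * ((t * r) ^ (-a) / a) := by ring
    _ ≤ ((a + t) * (t + 4) / t ^ 2) * P' + ((a + t) * t ^ (-a) / a) * r ^ (1 - a) :=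
        add_le_add hfirst hsecond
    _ = ((a + t) * (t + 4) / t ^ 2) * (Real.Gamma (2 - a) + 3)
        + (((a + t) * (t + 4) / t ^ 2) * (t + 4) + (a + t) * t ^ (-a) / a) * r ^ (1 - a) := by
        rw [hexpand]; ring

set_option maxHeartbeats 1000000 in
lemma myB_summable {a t Q C : ℝ} (ha0 : 0 < a) (ha2 : a < 2) (ha1 : a ≠ 1) (ht : 0 < t)
    (hQ : 0 ≤ Q) (hC : 0 < C) (cn : ℤ → ℝ) (hcn0 : ∀ k, 0 ≤ cn k)
    (hcnC : ∀ k : ℤ, k ≠ 0 → cn k ≤ C / (k:ℝ) ^ 2) :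
    Summable (fun p : ℤ × ℕ => Q * cn p.1 * (a + t * |(p.1:ℝ)|) * myD (myz a t p.1) p.2) := by
  have hfac0 : ∀ k : ℤ, 0 ≤ Q * cn k * (a + t * |(k:ℝ)|) := fun k => by
    have := hcn0 k
    have : (0:ℝ) ≤ a + t * |(k:ℝ)| := by positivity
    positivity
  have hnn : ∀ p : ℤ × ℕ, 0 ≤ Q * cn p.1 * (a + t * |(p.1:ℝ)|) * myD (myz a t p.1) p.2 :=
    fun p => mul_nonneg (hfac0 p.1) (myD_nonneg _ _)
  apply (summable_prod_of_nonneg hnn).mpr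
  constructor
  · intro k
    have := (myD_summable ha0 ha2 (myz_re a t k)).mul_left (Q * cn k * (a + t * |(k:ℝ)|))
    simpa using this
  · -- outer summability
    have heq : ∀ k : ℤ, (∑' j : ℕ, Q * cn k * (a + t * |(k:ℝ)|) * myD (myz a t k) j)
        = Q * cn k * (a + t * |(k:ℝ)|) * ∑' j : ℕ, myD (myz a t k) j := by
      intro k
      exact tsum_mul_left
    simp only [heq]
    -- define constants
    set K3 : ℝ := ((a + t) * (t + 4) / t ^ 2) * (Real.Gamma (2 - a) + 3) with hK3
    set K4 : ℝ := ((a + t) * (t + 4) / t ^ 2) * (t + 4) + (a + t) * t ^ (-a) / a with hK4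
    set g : ℤ → ℝ := fun k => Q * cn k * (a + t * |(k:ℝ)|) * ∑' j : ℕ, myD (myz a t k) j with hg
    have hg0 : ∀ k, 0 ≤ g k := fun k =>
      mul_nonneg (hfac0 k) (tsum_nonneg fun j => myD_nonneg _ _)
    have hmaj : ∀ k : ℤ, k ≠ 0 →
        g k ≤ (Q * C * K3) * (1 / (k:ℝ) ^ 2) + (Q * C * K4) * |(k:ℝ)| ^ (-(1 + a)) := by
      intro k hk
      set r : ℝ := |(k:ℝ)| with hrdef
      have hr1 : 1 ≤ r := by
        rw [hrdef]
        have h9 : (1:ℤ) ≤ |k| := Int.one_le_abs hk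
        have h10 : ((|k|:ℤ):ℝ) = |(k:ℝ)| := by push_cast; ring
        rw [← h10]
        exact_mod_cast h9
      have hr0 : (0:ℝ) < r := lt_of_lt_of_le one_pos hr1
      have hb : (0:ℝ) < t * r := by positivity
      have him : t * r ≤ |(myz a t k).im| := by
        rw [myz_im, abs_neg, abs_mul, abs_of_pos ht, hrdef]
        ring_nf
        exact le_refl _
      have htsum := myD_tsum_bound ha0 ha2 ha1 (myz_re a t k) hb him
      have hclaim := my_claim ha0 ha2 ha1 ht hr1
      have hcnk := hcnC k hk
      have htsum0 : 0 ≤ ∑' j : ℕ, myD (myz a t k) j := tsum_nonneg fun j => myD_nonneg _ _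
      have hstep1 : g k ≤ Q * cn k * ((a + t * r) * ((t * r + 4) *
          (Real.Gamma (2 - a) + (t * r + 4) ^ (1 - a) + 2) / (t * r) ^ 2 + (t * r) ^ (-a) / a)) := by
        rw [hg]
        have h0 : 0 ≤ Q * cn k := mul_nonneg hQ (hcn0 k)
        have h1 : 0 ≤ a + t * r := by positivity
        calc Q * cn k * (a + t * r) * ∑' j : ℕ, myD (myz a t k) j
            ≤ Q * cn k * (a + t * r) * ((t * r + 4) *
              (Real.Gamma (2 - a) + (t * r + 4) ^ (1 - a) + 2) / (t * r) ^ 2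
                + (t * r) ^ (-a) / a) := by
              apply mul_le_mul_of_nonneg_left htsum (by positivity)
          _ = Q * cn k * ((a + t * r) * ((t * r + 4) *
              (Real.Gamma (2 - a) + (t * r + 4) ^ (1 - a) + 2) / (t * r) ^ 2
                + (t * r) ^ (-a) / a)) := by ring
      have hRHS0 : 0 ≤ (a + t * r) * ((t * r + 4) *
          (Real.Gamma (2 - a) + (t * r + 4) ^ (1 - a) + 2) / (t * r) ^ 2 + (t * r) ^ (-a) / a) := by
        have e3 : (0:ℝ) ≤ Real.Gamma (2 - a) + (t * r + 4) ^ (1 - a) + 2 := by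
          have h5 := Real.rpow_nonneg (by positivity : (0:ℝ) ≤ t * r + 4) (1 - a)
          have h6 := (Real.Gamma_pos_of_pos (by linarith : (0:ℝ) < 2 - a)).le
          linarith
        have h7 := Real.rpow_nonneg (by positivity : (0:ℝ) ≤ t * r) (-a)
        positivity
      have hstep2 : g k ≤ Q * (C / r ^ 2) * (K3 + K4 * r ^ (1 - a)) := by
        refine hstep1.trans ?_
        have hcnr : cn k ≤ C / r ^ 2 := by
          rw [hrdef]
          have : |(k:ℝ)| ^ 2 = (k:ℝ) ^ 2 := sq_abs _
          rw [this]
          exact hcnk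
        calc Q * cn k * ((a + t * r) * (_ + _)) ≤ Q * (C / r ^ 2) * ((a + t * r) * ((t * r + 4) *
            (Real.Gamma (2 - a) + (t * r + 4) ^ (1 - a) + 2) / (t * r) ^ 2 + (t * r) ^ (-a) / a)) := by
              apply mul_le_mul_of_nonneg_right _ hRHS0
              apply mul_le_mul_of_nonneg_left hcnr hQ
          _ ≤ Q * (C / r ^ 2) * (K3 + K4 * r ^ (1 - a)) := by
              apply mul_le_mul_of_nonneg_left hclaim (by positivity)
      refine hstep2.trans (le_of_eq ?_)
      have hrpow : r ^ (1 - a) / r ^ 2 = r ^ (-(1 + a)) := by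
        rw [← Real.rpow_natCast r 2, ← Real.rpow_sub hr0]
        congr 1
        push_cast
        ring
      calc Q * (C / r ^ 2) * (K3 + K4 * r ^ (1 - a))
          = (Q * C * K3) * (1 / r ^ 2) + (Q * C * K4) * (r ^ (1 - a) / r ^ 2) := by ring
        _ = (Q * C * K3) * (1 / (k:ℝ) ^ 2) + (Q * C * K4) * r ^ (-(1 + a)) := by
            rw [hrpow, hrdef, _root_.sq_abs]
    -- summable majorant
    have hmaj_summable : Summable (fun k : ℤ => (Q * C * K3) * (1 / (k:ℝ) ^ 2)
        + (Q * C * K4) * |(k:ℝ)| ^ (-(1 + a)) + (if k = 0 then g 0 else 0)) := by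
      apply Summable.add
      apply Summable.add
      · exact (Real.summable_one_div_int_pow.mpr (by norm_num)).mul_left _
      · exact (Real.summable_abs_int_rpow (by linarith)).mul_left _
      · exact (hasSum_ite_eq (0:ℤ) (g 0)).summable
    apply Summable.of_nonneg_of_le hg0 _ hmaj_summable
    intro k
    rcases eq_or_ne k 0 with rfl | hk
    · have h1 : (1:ℝ) / ((0:ℤ):ℝ) ^ 2 = 0 := by norm_num
      have hne : -(1 + a) ≠ 0 := by intro hcon; linarith
      have h2 : |((0:ℤ):ℝ)| ^ (-(1 + a)) = 0 := by
        rw [Int.cast_zero, abs_zero, Real.zero_rpow hne]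
      rw [if_pos rfl, h1, h2]
      simp
    · have h1 := hmaj k hk
      have h2 : (if k = 0 then g 0 else 0) = 0 := by simp [hk]
      rw [h2]
      linarith

lemma my_term_norm (z : ℂ) (hznat : ∀ n : ℕ, z ≠ (n : ℂ)) (j : ℕ) :
    ‖Complex.Gamma (1 - z)‖ * ‖gbinom z j‖ =
      ‖z‖ * ‖Complex.Gamma ((j:ℂ) - z)‖ / (j.factorial : ℝ) := by
  unfold gbinom
  rw [norm_div]
  have hfac : ‖((j.factorial : ℕ) : ℂ)‖ = (j.factorial : ℝ) := by
    simp
  rw [hfac, mul_div_assoc']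
  congr 1
  rw [← norm_mul, my_gbinom_gamma z hznat j]
  rw [norm_mul, norm_mul]
  simp


lemma my_cpow_conj {r : ℝ} (hr : 0 < r) (w : ℂ) :
    (r:ℂ) ^ ((starRingEnd ℂ) w) = (starRingEnd ℂ) ((r:ℂ) ^ w) := by
  have hr0 : (r:ℂ) ≠ 0 := Complex.ofReal_ne_zero.mpr hr.ne'
  rw [Complex.cpow_def_of_ne_zero hr0, Complex.cpow_def_of_ne_zero hr0, ← Complex.exp_conj,
    map_mul]
  congr 1
  rw [← Complex.ofReal_log hr.le, Complex.conj_ofReal]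

lemma my_gbinom_conj (z : ℂ) (j : ℕ) :
    gbinom ((starRingEnd ℂ) z) j = (starRingEnd ℂ) (gbinom z j) := by
  unfold gbinom
  rw [map_div₀, map_prod]
  congr 1
  · apply Finset.prod_congr rfl
    intro i _
    rw [map_sub, Complex.conj_natCast]
  · rw [Complex.conj_natCast]

set_option maxHeartbeats 2000000 in
theorem stmt12 (c α : ℝ) (hc : 1 < c) (hα : α ∈ Set.Ioo (0 : ℝ) 2) (hα1 : α ≠ 1)
    (θ : ℝ → ℝ) (cfs : ℤ → ℂ) (hθ : IsSmoothAdmissible c α θ cfs)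
    (ctil : ℝ) (hctil : ctil = 2 * Real.pi * α / Real.log c)
    (ω : ℤ → ℂ)
    (hω : ∀ k : ℤ, ω k = (if α < 1 then 1 else -1) *
      (cfs k * Complex.Gamma (Complex.I * (k : ℂ) * (ctil : ℂ) - (α : ℂ) + 1)))
    (f : ℝ → ℝ) (hfb : ∃ M : ℝ, ∀ y, |f y| ≤ M)
    (h : ℝ) (hh : 0 < h) (x : ℝ) :
    Summable (fun p : ℤ × ℕ =>
      ‖ω p.1 * ((h : ℂ)) ^ (Complex.I * (p.1 : ℂ) * (ctil : ℂ) - (α : ℂ)) *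
        (gbinom ((α : ℂ) - Complex.I * (p.1 : ℂ) * (ctil : ℂ)) p.2 * (-1 : ℂ) ^ p.2 *
          ((f (x - p.2 * h) : ℝ) : ℂ))‖) ∧
    (∑' k : ℤ, ω k * ((h : ℂ)) ^ (Complex.I * (k : ℂ) * (ctil : ℂ) - (α : ℂ)) *
        ∑' j : ℕ, gbinom ((α : ℂ) - Complex.I * (k : ℂ) * (ctil : ℂ)) j * (-1 : ℂ) ^ j *
          ((f (x - j * h) : ℝ) : ℂ)).im = 0 := by
  obtain ⟨hα0, hα2⟩ := hα
  have hlogc : 0 < Real.log c := Real.log_pos hc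
  have ht : 0 < ctil := by
    rw [hctil]
    have := Real.pi_pos
    positivity
  obtain ⟨-, -, hconj, ⟨C, hCpos, hC⟩, -, -⟩ := hθ
  obtain ⟨M, hM⟩ := hfb
  have hM0 : 0 ≤ M := le_trans (abs_nonneg _) (hM 0)
  set Q : ℝ := M * h ^ (-α) with hQdef
  have hQ0 : 0 ≤ Q := mul_nonneg hM0 (Real.rpow_nonneg hh.le _)
  have hznat : ∀ k : ℤ, ∀ n : ℕ, myz α ctil k ≠ (n : ℂ) :=
    fun k n => myz_natcast_ne hα0 hα2 hα1 ht k n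
  -- pointwise norm bound
  have hterm_le : ∀ (k : ℤ) (j : ℕ),
      ‖ω k * ((h : ℂ)) ^ (Complex.I * (k : ℂ) * (ctil : ℂ) - (α : ℂ)) *
        (gbinom ((α : ℂ) - Complex.I * (k : ℂ) * (ctil : ℂ)) j * (-1 : ℂ) ^ j *
          ((f (x - j * h) : ℝ) : ℂ))‖
      ≤ Q * ‖cfs k‖ * (α + ctil * |(k:ℝ)|) * myD (myz α ctil k) j := by
    intro k j
    rw [hω k]
    have hns : ‖(if α < 1 then (1:ℂ) else -1)‖ = 1 := by split_ifs <;> simp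
    have h2 : Complex.I * (k:ℂ) * (ctil:ℂ) - (α:ℂ) + 1 = 1 - myz α ctil k := by
      unfold myz; ring
    have h3 : (α:ℂ) - Complex.I * (k:ℂ) * (ctil:ℂ) = myz α ctil k := rfl
    have h1 : ‖((h:ℝ):ℂ) ^ (Complex.I * (k:ℂ) * (ctil:ℂ) - (α:ℂ))‖ = h ^ (-α) := by
      rw [Complex.norm_cpow_eq_rpow_re_of_pos hh]
      congr 1
      simp [Complex.sub_re, Complex.mul_re]
    have h6 : ‖((f (x - j * h) : ℝ) : ℂ)‖ ≤ M := by
      rw [Complex.norm_real, Real.norm_eq_abs]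
      exact hM _
    rw [h2, h3]
    simp only [norm_mul, hns, one_mul, norm_pow, norm_neg, norm_one, one_pow, mul_one, h1]
    have h4 := my_term_norm (myz α ctil k) (hznat k) j
    have h5 := myz_norm_le hα0 ht k
    have hfp : (0:ℝ) < (j.factorial : ℝ) := by exact_mod_cast j.factorial_pos
    calc ‖cfs k‖ * ‖Complex.Gamma (1 - myz α ctil k)‖ * h ^ (-α) *
          (‖gbinom (myz α ctil k) j‖ * ‖((f (x - j * h) : ℝ) : ℂ)‖)
        ≤ ‖cfs k‖ * ‖Complex.Gamma (1 - myz α ctil k)‖ * h ^ (-α) *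
          (‖gbinom (myz α ctil k) j‖ * M) := by
          have hz0 : (0:ℝ) ≤ ‖cfs k‖ * ‖Complex.Gamma (1 - myz α ctil k)‖ * h ^ (-α) := by
            positivity
          have hgb0 : (0:ℝ) ≤ ‖gbinom (myz α ctil k) j‖ := norm_nonneg _
          apply mul_le_mul_of_nonneg_left _ hz0
          exact mul_le_mul_of_nonneg_left h6 hgb0
      _ = (‖cfs k‖ * M * h ^ (-α)) *
          (‖Complex.Gamma (1 - myz α ctil k)‖ * ‖gbinom (myz α ctil k) j‖) := by ring
      _ = (‖cfs k‖ * M * h ^ (-α)) *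
          (‖myz α ctil k‖ * (‖Complex.Gamma ((j:ℂ) - myz α ctil k)‖ / (j.factorial : ℝ))) := by
          rw [h4, mul_div_assoc]
      _ ≤ (‖cfs k‖ * M * h ^ (-α)) *
          ((α + ctil * |(k:ℝ)|) * (‖Complex.Gamma ((j:ℂ) - myz α ctil k)‖ / (j.factorial : ℝ))) := by
          apply mul_le_mul_of_nonneg_left _ (by positivity)
          apply mul_le_mul_of_nonneg_right h5 (by positivity)
      _ = Q * ‖cfs k‖ * (α + ctil * |(k:ℝ)|) * myD (myz α ctil k) j := by
          unfold myD
          rw [hQdef]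
          ring
  -- Part 1
  have hpart1 : Summable (fun p : ℤ × ℕ =>
      ‖ω p.1 * ((h : ℂ)) ^ (Complex.I * (p.1 : ℂ) * (ctil : ℂ) - (α : ℂ)) *
        (gbinom ((α : ℂ) - Complex.I * (p.1 : ℂ) * (ctil : ℂ)) p.2 * (-1 : ℂ) ^ p.2 *
          ((f (x - p.2 * h) : ℝ) : ℂ))‖) := by
    have hBsum : Summable (fun p : ℤ × ℕ =>
        Q * ‖cfs p.1‖ * (α + ctil * |(p.1:ℝ)|) * myD (myz α ctil p.1) p.2) :=
      myB_summable hα0 hα2 hα1 ht hQ0 hCpos (fun k => ‖cfs k‖) (fun k => norm_nonneg _) hC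
    exact Summable.of_nonneg_of_le (fun p => norm_nonneg _) (fun p => hterm_le p.1 p.2) hBsum
  refine ⟨hpart1, ?_⟩
  -- Part 2
  obtain ⟨hinner, houter⟩ := (summable_prod_of_nonneg (fun p => norm_nonneg _)).mp hpart1
  set F : ℤ → ℂ := fun k => ω k * ((h : ℂ)) ^ (Complex.I * (k : ℂ) * (ctil : ℂ) - (α : ℂ)) *
      ∑' j : ℕ, gbinom ((α : ℂ) - Complex.I * (k : ℂ) * (ctil : ℂ)) j * (-1 : ℂ) ^ j *
        ((f (x - j * h) : ℝ) : ℂ) with hFdef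
  have hFbound : ∀ k : ℤ,
      ‖F k‖ ≤ ∑' j : ℕ, ‖ω k * ((h : ℂ)) ^ (Complex.I * (k : ℂ) * (ctil : ℂ) - (α : ℂ)) *
        (gbinom ((α : ℂ) - Complex.I * (k : ℂ) * (ctil : ℂ)) j * (-1 : ℂ) ^ j *
          ((f (x - j * h) : ℝ) : ℂ))‖ := by
    intro k
    by_cases hz : ω k * ((h : ℂ)) ^ (Complex.I * (k : ℂ) * (ctil : ℂ) - (α : ℂ)) = 0
    · have : F k = 0 := by rw [hFdef]; simp only []; rw [hz, zero_mul]
      rw [this, norm_zero]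
      exact tsum_nonneg fun j => norm_nonneg _
    · have hsn : Summable (fun j : ℕ =>
          ‖gbinom ((α : ℂ) - Complex.I * (k : ℂ) * (ctil : ℂ)) j * (-1 : ℂ) ^ j *
            ((f (x - j * h) : ℝ) : ℂ)‖) := by
        have h9 := hinner k
        have h10 : (fun j : ℕ => ‖ω k * ((h : ℂ)) ^ (Complex.I * (k : ℂ) * (ctil : ℂ) - (α : ℂ)) *
            (gbinom ((α : ℂ) - Complex.I * (k : ℂ) * (ctil : ℂ)) j * (-1 : ℂ) ^ j *
              ((f (x - j * h) : ℝ) : ℂ))‖)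
            = fun j : ℕ => ‖ω k * ((h : ℂ)) ^ (Complex.I * (k : ℂ) * (ctil : ℂ) - (α : ℂ))‖ *
              ‖gbinom ((α : ℂ) - Complex.I * (k : ℂ) * (ctil : ℂ)) j * (-1 : ℂ) ^ j *
                ((f (x - j * h) : ℝ) : ℂ)‖ := funext fun j => norm_mul _ _
        have h11 : Summable (fun j : ℕ =>
            ‖ω k * ((h : ℂ)) ^ (Complex.I * (k : ℂ) * (ctil : ℂ) - (α : ℂ))‖ *
              ‖gbinom ((α : ℂ) - Complex.I * (k : ℂ) * (ctil : ℂ)) j * (-1 : ℂ) ^ j *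
                ((f (x - j * h) : ℝ) : ℂ)‖) := by
          rw [← h10]
          exact h9
        exact (summable_mul_left_iff (norm_ne_zero_iff.mpr hz)).mp h11
      have hF : F k = ω k * ((h : ℂ)) ^ (Complex.I * (k : ℂ) * (ctil : ℂ) - (α : ℂ)) *
          ∑' j : ℕ, gbinom ((α : ℂ) - Complex.I * (k : ℂ) * (ctil : ℂ)) j * (-1 : ℂ) ^ j *
            ((f (x - j * h) : ℝ) : ℂ) := rfl
      calc ‖F k‖ = ‖ω k * ((h : ℂ)) ^ (Complex.I * (k : ℂ) * (ctil : ℂ) - (α : ℂ))‖ *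
            ‖∑' j : ℕ, gbinom ((α : ℂ) - Complex.I * (k : ℂ) * (ctil : ℂ)) j * (-1 : ℂ) ^ j *
              ((f (x - j * h) : ℝ) : ℂ)‖ := by rw [hF, norm_mul]
        _ ≤ ‖ω k * ((h : ℂ)) ^ (Complex.I * (k : ℂ) * (ctil : ℂ) - (α : ℂ))‖ *
            ∑' j : ℕ, ‖gbinom ((α : ℂ) - Complex.I * (k : ℂ) * (ctil : ℂ)) j * (-1 : ℂ) ^ j *
              ((f (x - j * h) : ℝ) : ℂ)‖ :=
            mul_le_mul_of_nonneg_left (norm_tsum_le_tsum_norm hsn) (norm_nonneg _)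
        _ = ∑' j : ℕ, ‖ω k * ((h : ℂ)) ^ (Complex.I * (k : ℂ) * (ctil : ℂ) - (α : ℂ))‖ *
            ‖gbinom ((α : ℂ) - Complex.I * (k : ℂ) * (ctil : ℂ)) j * (-1 : ℂ) ^ j *
              ((f (x - j * h) : ℝ) : ℂ)‖ := tsum_mul_left.symm
        _ = ∑' j : ℕ, ‖ω k * ((h : ℂ)) ^ (Complex.I * (k : ℂ) * (ctil : ℂ) - (α : ℂ)) *
            (gbinom ((α : ℂ) - Complex.I * (k : ℂ) * (ctil : ℂ)) j * (-1 : ℂ) ^ j *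
              ((f (x - j * h) : ℝ) : ℂ))‖ := tsum_congr fun j => (norm_mul _ _).symm
  have hFsummable : Summable F :=
    Summable.of_norm_bounded houter hFbound
  have him : (∑' k : ℤ, F k).im = ∑' k : ℤ, (F k).im := by
    have := Complex.imCLM.map_tsum hFsummable
    simpa using this
  have hFconj : ∀ k : ℤ, F (-k) = (starRingEnd ℂ) (F k) := by
    intro k
    have hcast : ((-k : ℤ) : ℂ) = -(k:ℂ) := by push_cast; ring
    have hargG : Complex.I * ((-k : ℤ):ℂ) * (ctil:ℂ) - (α:ℂ) + 1 =
        (starRingEnd ℂ) (Complex.I * (k:ℂ) * (ctil:ℂ) - (α:ℂ) + 1) := by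
      rw [hcast]
      simp only [map_add, map_sub, map_mul, map_one, Complex.conj_I, Complex.conj_ofReal,
        map_intCast]
      ring
    have hargw : Complex.I * ((-k : ℤ):ℂ) * (ctil:ℂ) - (α:ℂ) =
        (starRingEnd ℂ) (Complex.I * (k:ℂ) * (ctil:ℂ) - (α:ℂ)) := by
      rw [hcast]
      simp only [map_sub, map_mul, Complex.conj_I, Complex.conj_ofReal, map_intCast]
      ring
    have hargz : (α:ℂ) - Complex.I * ((-k : ℤ):ℂ) * (ctil:ℂ) =
        (starRingEnd ℂ) ((α:ℂ) - Complex.I * (k:ℂ) * (ctil:ℂ)) := by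
      rw [hcast]
      simp only [map_sub, map_mul, Complex.conj_I, Complex.conj_ofReal, map_intCast]
      ring
    have hω1 : ω (-k) = (starRingEnd ℂ) (ω k) := by
      rw [hω (-k), hω k, hargG, Complex.Gamma_conj, hconj k, map_mul, map_mul]
      congr 1
      split_ifs <;> simp
    have hp1 : ((h:ℝ):ℂ) ^ (Complex.I * ((-k : ℤ):ℂ) * (ctil:ℂ) - (α:ℂ)) =
        (starRingEnd ℂ) (((h:ℝ):ℂ) ^ (Complex.I * (k:ℂ) * (ctil:ℂ) - (α:ℂ))) := by
      rw [hargw, my_cpow_conj hh]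
    have hin : (∑' j : ℕ, gbinom ((α:ℂ) - Complex.I * ((-k : ℤ):ℂ) * (ctil:ℂ)) j * (-1:ℂ) ^ j *
          ((f (x - j * h) : ℝ) : ℂ))
        = (starRingEnd ℂ) (∑' j : ℕ, gbinom ((α:ℂ) - Complex.I * (k:ℂ) * (ctil:ℂ)) j *
            (-1:ℂ) ^ j * ((f (x - j * h) : ℝ) : ℂ)) := by
      rw [starRingEnd_apply, tsum_star]
      apply tsum_congr
      intro j
      rw [← starRingEnd_apply, map_mul, map_mul, hargz, my_gbinom_conj]
      congr 1
      · rw [map_pow, map_neg, map_one]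
      · rw [Complex.conj_ofReal]
    show ω (-k) * ((h : ℂ)) ^ (Complex.I * ((-k : ℤ) : ℂ) * (ctil : ℂ) - (α : ℂ)) *
        ∑' j : ℕ, gbinom ((α : ℂ) - Complex.I * ((-k : ℤ) : ℂ) * (ctil : ℂ)) j * (-1 : ℂ) ^ j *
          ((f (x - j * h) : ℝ) : ℂ) = (starRingEnd ℂ)
      (ω k * ((h : ℂ)) ^ (Complex.I * (k : ℂ) * (ctil : ℂ) - (α : ℂ)) *
        ∑' j : ℕ, gbinom ((α : ℂ) - Complex.I * (k : ℂ) * (ctil : ℂ)) j * (-1 : ℂ) ^ j *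
          ((f (x - j * h) : ℝ) : ℂ))
    rw [hω1, hp1, hin, ← map_mul, ← map_mul]
  rw [him]
  have hodd : ∀ k : ℤ, (F (-k)).im = -(F k).im := fun k => by
    rw [hFconj k]
    exact Complex.conj_im _
  have hneg : ∑' k : ℤ, (F k).im = -∑' k : ℤ, (F k).im := by
    calc ∑' k : ℤ, (F k).im = ∑' k : ℤ, (F (-k)).im :=
          ((Equiv.neg ℤ).tsum_eq fun k => (F k).im).symm
      _ = ∑' k : ℤ, -((F k).im) := tsum_congr fun k => hodd k
      _ = -∑' k : ℤ, (F k).im := tsum_neg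
  linarith
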